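/- The group G is isomorphic to the Poincaré group ISO(1,n−1): there is a group isomorphism between G and the semidirect product of the additive group ℝ^n by H = {B ∈ GL(n,ℝ) : η(Bu,Bv) = η(u,v) for all u,v ∈ ℝ^n, det B = 1}, where H acts on ℝ^n by the standard linear action (matrix–vector multiplication). -/

import Mathlib

def formSig (k m : ℕ) (x y : Fin m → ℝ) : ℝ :=
  ∑ i : Fin m, (if (i : ℕ) < k then -(x i * y i) else x i * y i)

/-- The group of linear automorphisms of `ℝ^m` with determinant `1` preserving the
bilinear form `formSig k m` (of signature `(k, m-k)`), realized as a subgroup of the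
group of invertible `m × m` real matrices. -/
def specialIsometry (k m : ℕ) : Subgroup (Matrix (Fin m) (Fin m) ℝ)ˣ where
  carrier := {A | ((A : Matrix (Fin m) (Fin m) ℝ)).det = 1 ∧
    ∀ x y : Fin m → ℝ,
      formSig k m ((A : Matrix (Fin m) (Fin m) ℝ).mulVec x)
        ((A : Matrix (Fin m) (Fin m) ℝ).mulVec y) = formSig k m x y}
  one_mem' := by
    refine ⟨by simp, fun x y => by simp⟩
  mul_mem' := by
    intro a b ha hb
    obtain ⟨had, haf⟩ := ha
    obtain ⟨hbd, hbf⟩ := hb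
    refine ⟨by rw [Units.val_mul, Matrix.det_mul, had, hbd, mul_one], fun x y => ?_⟩
    rw [Units.val_mul, ← Matrix.mulVec_mulVec, ← Matrix.mulVec_mulVec, haf, hbf]
  inv_mem' := by
    intro a ha
    obtain ⟨had, haf⟩ := ha
    have hinv : (↑a⁻¹ : Matrix (Fin m) (Fin m) ℝ) * (↑a : Matrix (Fin m) (Fin m) ℝ) = 1 := a.inv_mul
    refine ⟨?_, fun x y => ?_⟩
    · have h := congrArg Matrix.det hinv
      rw [Matrix.det_mul, had, mul_one, Matrix.det_one] at h
      exact h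
    · have hx : ∀ v : Fin m → ℝ,
          (↑a : Matrix (Fin m) (Fin m) ℝ).mulVec
            ((↑a⁻¹ : Matrix (Fin m) (Fin m) ℝ).mulVec v) = v := by
        intro v
        rw [Matrix.mulVec_mulVec, a.mul_inv, Matrix.one_mulVec]
      calc formSig k m ((↑a⁻¹ : Matrix (Fin m) (Fin m) ℝ).mulVec x)
              ((↑a⁻¹ : Matrix (Fin m) (Fin m) ℝ).mulVec y)
          = formSig k m
              ((↑a : Matrix (Fin m) (Fin m) ℝ).mulVec
                ((↑a⁻¹ : Matrix (Fin m) (Fin m) ℝ).mulVec x))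
              ((↑a : Matrix (Fin m) (Fin m) ℝ).mulVec
                ((↑a⁻¹ : Matrix (Fin m) (Fin m) ℝ).mulVec y)) := (haf _ _).symm
        _ = formSig k m x y := by rw [hx, hx]

/-- The subgroup of invertible `m × m` real matrices fixing a given vector `v`. -/
def vecStab (m : ℕ) (v : Fin m → ℝ) : Subgroup (Matrix (Fin m) (Fin m) ℝ)ˣ where
  carrier := {A | (A : Matrix (Fin m) (Fin m) ℝ).mulVec v = v}
  one_mem' := by simp
  mul_mem' := by
    intro a b ha hb
    show ((a * b : (Matrix (Fin m) (Fin m) ℝ)ˣ) : Matrix (Fin m) (Fin m) ℝ).mulVec v = v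
    rw [Units.val_mul, ← Matrix.mulVec_mulVec, hb, ha]
  inv_mem' := by
    intro a ha
    show ((a⁻¹ : (Matrix (Fin m) (Fin m) ℝ)ˣ) : Matrix (Fin m) (Fin m) ℝ).mulVec v = v
    conv_lhs => rw [← ha]
    rw [Matrix.mulVec_mulVec, a.inv_mul, Matrix.one_mulVec]

/-- The 'Poincaré subgroup' of `SL(n+2,ℝ)` determined by the signature `(2,n)` form
`formSig 2 (n+2)` and the null vector `I`. -/
def poincareGroup (n : ℕ) (I : Fin (n + 2) → ℝ) :
    Subgroup (Matrix (Fin (n + 2)) (Fin (n + 2)) ℝ)ˣ :=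
  specialIsometry 2 (n + 2) ⊓ vecStab (n + 2) I

/-- The multiplicative automorphism of `Multiplicative ℝ^m` induced by an invertible
matrix acting by matrix–vector multiplication. -/
def mulVecMulAut {m : ℕ} (A : (Matrix (Fin m) (Fin m) ℝ)ˣ) :
    Multiplicative (Fin m → ℝ) ≃* Multiplicative (Fin m → ℝ) where
  toFun v := Multiplicative.ofAdd
    ((A : Matrix (Fin m) (Fin m) ℝ).mulVec (Multiplicative.toAdd v))
  invFun v := Multiplicative.ofAdd
    ((↑A⁻¹ : Matrix (Fin m) (Fin m) ℝ).mulVec (Multiplicative.toAdd v))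
  left_inv v := by
    simp only [toAdd_ofAdd, Matrix.mulVec_mulVec, Units.inv_mul, Matrix.one_mulVec,
      ofAdd_toAdd]
  right_inv v := by
    simp only [toAdd_ofAdd, Matrix.mulVec_mulVec, Units.mul_inv, Matrix.one_mulVec,
      ofAdd_toAdd]
  map_mul' u v := by
    simp only [toAdd_mul, Matrix.mulVec_add, ofAdd_add]

/-- A subgroup of invertible `m × m` real matrices acts on the (additive, written
multiplicatively) translation group `ℝ^m` by matrix–vector multiplication. -/
def subgroupMulVecHom {m : ℕ} (S : Subgroup (Matrix (Fin m) (Fin m) ℝ)ˣ) :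
    S →* MulAut (Multiplicative (Fin m → ℝ)) where
  toFun A := mulVecMulAut (A : (Matrix (Fin m) (Fin m) ℝ)ˣ)
  map_one' := by
    ext v
    simp [mulVecMulAut]
  map_mul' a b := by
    ext v
    simp [mulVecMulAut, MulAut.mul_apply, Matrix.mulVec_mulVec]


namespace PoinAux
open Matrix

noncomputable section

variable {n : ℕ}

/-! ### Basic form machinery -/

def sgn (k m : ℕ) : Fin m → ℝ := fun i => if (i:ℕ) < k then -1 else 1

def Qm (k m : ℕ) : Matrix (Fin m) (Fin m) ℝ := Matrix.diagonal (sgn k m)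

lemma formSig_eq (k m : ℕ) (x y : Fin m → ℝ) :
    formSig k m x y = x ⬝ᵥ (Qm k m).mulVec y := by
  unfold formSig Qm dotProduct
  refine Finset.sum_congr rfl fun i _ => ?_
  rw [Matrix.mulVec_diagonal]
  unfold sgn
  split <;> ring

lemma Qm_sq (k m : ℕ) : Qm k m * Qm k m = 1 := by
  unfold Qm
  rw [Matrix.diagonal_mul_diagonal]
  have : (fun i => sgn k m i * sgn k m i) = fun _ : Fin m => (1:ℝ) := by
    funext i; unfold sgn; split <;> norm_num
  rw [this, Matrix.diagonal_one]

lemma Qm_symm (k m : ℕ) : (Qm k m)ᵀ = Qm k m := Matrix.diagonal_transpose _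

lemma dot_cancel {m : ℕ} (C D : Matrix (Fin m) (Fin m) ℝ)
    (h : ∀ x y, x ⬝ᵥ C.mulVec y = x ⬝ᵥ D.mulVec y) : C = D := by
  ext i j
  have := h (Pi.single i 1) (Pi.single j 1)
  simpa [Matrix.mulVec_single, single_dotProduct] using this

lemma formSig_mulVec (k m : ℕ) (M : Matrix (Fin m) (Fin m) ℝ) (x y : Fin m → ℝ) :
    formSig k m (M.mulVec x) (M.mulVec y) = x ⬝ᵥ (Mᵀ * Qm k m * M).mulVec y := by
  rw [formSig_eq, Matrix.mulVec_mulVec, Matrix.dotProduct_mulVec,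
    ← Matrix.vecMul_transpose, Matrix.vecMul_vecMul, ← Matrix.dotProduct_mulVec,
    Matrix.mul_assoc]

lemma formPres_iff (k m : ℕ) (M : Matrix (Fin m) (Fin m) ℝ) :
    (∀ x y, formSig k m (M.mulVec x) (M.mulVec y) = formSig k m x y) ↔
      Mᵀ * Qm k m * M = Qm k m := by
  constructor
  · intro h
    refine dot_cancel _ _ fun x y => ?_
    rw [← formSig_mulVec, h, formSig_eq]
  · intro h x y
    rw [formSig_mulVec, h, formSig_eq]

lemma mulVec_dot {m : Type*} [Fintype m] (M : Matrix m m ℝ) (x y : m → ℝ) :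
    (M.mulVec x) ⬝ᵥ y = x ⬝ᵥ (Mᵀ.mulVec y) := by
  rw [← Matrix.vecMul_transpose, Matrix.dotProduct_mulVec]

lemma mulVec_dot_mulVec {m : Type*} [Fintype m] (M Q : Matrix m m ℝ) (x y : m → ℝ) :
    (M.mulVec x) ⬝ᵥ (Q.mulVec (M.mulVec y)) = x ⬝ᵥ ((Mᵀ * Q * M).mulVec y) := by
  rw [Matrix.mulVec_mulVec, Matrix.dotProduct_mulVec, ← Matrix.vecMul_transpose,
    Matrix.vecMul_vecMul, ← Matrix.dotProduct_mulVec, Matrix.mul_assoc]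

lemma diag_dot_comm {m : Type*} [Fintype m] [DecidableEq m] (d : m → ℝ) (x y : m → ℝ) :
    x ⬝ᵥ (Matrix.diagonal d).mulVec y = y ⬝ᵥ (Matrix.diagonal d).mulVec x := by
  unfold dotProduct
  refine Finset.sum_congr rfl fun i _ => ?_
  rw [Matrix.mulVec_diagonal, Matrix.mulVec_diagonal]; ring

/-! ### Index equivalences -/

def σf (hn : 0 < n) : Fin (n + 2) ≃ Fin 2 ⊕ Fin n where
  toFun i :=
    if h0 : (i:ℕ) = 0 then Sum.inl 0
    else if h2 : (i:ℕ) = 2 then Sum.inl 1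
    else if h1 : (i:ℕ) = 1 then Sum.inr ⟨0, hn⟩
    else Sum.inr ⟨(i:ℕ) - 2, by omega⟩
  invFun s :=
    match s with
    | Sum.inl p => if p = 0 then ⟨0, by omega⟩ else ⟨2, by omega⟩
    | Sum.inr j => if (j:ℕ) = 0 then ⟨1, by omega⟩ else ⟨(j:ℕ) + 2, by omega⟩
  left_inv i := by
    by_cases h0 : (i:ℕ) = 0
    · simp only [h0, dif_pos]; simp; exact (Fin.ext h0.symm)
    · by_cases h2 : (i:ℕ) = 2
      · simp only [h0, dif_neg, not_false_iff, h2, dif_pos]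
        simp; exact Fin.ext h2.symm
      · by_cases h1 : (i:ℕ) = 1
        · simp only [h0, h2, h1, dif_neg, not_false_iff, dif_pos]
          simp; exact Fin.ext h1.symm
        · simp only [h0, h2, h1, dif_neg, not_false_iff]
          have : (i:ℕ) - 2 ≠ 0 := by omega
          simp [this]; exact Fin.ext (by simp; omega)
  right_inv s := by
    match s with
    | Sum.inl p =>
      by_cases hp : p = 0
      · subst hp; simp
      · have : p = 1 := by omega
        subst this; simp
    | Sum.inr j =>
      by_cases hj : (j:ℕ) = 0
      · simp [hj]
        exact Fin.ext (by simpa using hj.symm)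
      · simp only [hj, if_neg, not_false_iff]
        have h2 : ((j:ℕ) + 2 : ℕ) ≠ 0 := by omega
        have h3 : ((j:ℕ) + 2 : ℕ) ≠ 2 := by omega
        have h4 : ((j:ℕ) + 2 : ℕ) ≠ 1 := by omega
        simp [h2, h3, h4]
        exact hj

def τf : Fin (n + 2) ≃ Fin 2 ⊕ Fin n where
  toFun i :=
    if h : (i:ℕ) < 2 then Sum.inl ⟨i, h⟩ else Sum.inr ⟨(i:ℕ) - 2, by omega⟩
  invFun s :=
    match s with
    | Sum.inl p => ⟨p, by omega⟩
    | Sum.inr j => ⟨(j:ℕ) + 2, by omega⟩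
  left_inv i := by
    by_cases h : (i:ℕ) < 2
    · simp [h]
    · simp [h]; exact Fin.ext (by simp; omega)
  right_inv s := by
    match s with
    | Sum.inl p => simp [p.isLt]
    | Sum.inr j =>
      have : ¬ ((j:ℕ) + 2 < 2) := by omega
      simp [this]

def uvec (n : ℕ) : Fin (n+2) → ℝ := fun i => if (i:ℕ) = 0 ∨ (i:ℕ) = 2 then 1 else 0

def U0 (n : ℕ) : Fin 2 ⊕ Fin n → ℝ := Sum.elim (fun _ => 1) (fun _ => 0)

lemma σ_inl0 (hn : 0 < n) : (((σf hn).symm (Sum.inl 0) : Fin (n+2)) : ℕ) = 0 := rfl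
lemma σ_inl1 (hn : 0 < n) : (((σf hn).symm (Sum.inl 1) : Fin (n+2)) : ℕ) = 2 := rfl
lemma σ_inr (hn : 0 < n) (j : Fin n) :
    (((σf hn).symm (Sum.inr j)) : ℕ) = if (j:ℕ) = 0 then 1 else (j:ℕ)+2 := by
  unfold σf
  simp only [Equiv.coe_fn_symm_mk]
  split <;> rfl

lemma sgn_σ_inr (hn : 0 < n) (j : Fin n) :
    sgn 2 (n+2) ((σf hn).symm (Sum.inr j)) = sgn 1 n j := by
  unfold sgn
  have h := σ_inr hn j
  by_cases hj : (j:ℕ) = 0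
  · rw [h, if_pos hj]; simp [hj]
  · rw [h, if_neg hj]
    have h1 : ¬ ((j:ℕ)+2 < 2) := by omega
    have h2 : ¬ ((j:ℕ) < 1) := by omega
    simp [h1, h2]

lemma uvec_σ (hn : 0 < n) : uvec n ∘ (σf hn).symm = U0 n := by
  funext s
  rcases s with p | j
  · fin_cases p
    · show uvec n ((σf hn).symm (Sum.inl 0)) = 1
      unfold uvec; rw [σ_inl0]; simp
    · show uvec n ((σf hn).symm (Sum.inl 1)) = 1
      unfold uvec; rw [σ_inl1]; simp
  · show uvec n ((σf hn).symm (Sum.inr j)) = 0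
    unfold uvec; rw [σ_inr]
    split_ifs with h <;> simp_all

lemma τ_inl (p : Fin 2) : ((τf (n := n)).symm (Sum.inl p) : ℕ) = (p : ℕ) := rfl
lemma τ_inr (j : Fin n) : ((τf (n := n)).symm (Sum.inr j) : ℕ) = (j : ℕ) + 2 := rfl

lemma uvec_τ : uvec n ∘ (τf (n := n)).symm =
    Sum.elim (fun p : Fin 2 => if p = 0 then (1:ℝ) else 0)
      (fun j : Fin n => if (j:ℕ) = 0 then 1 else 0) := by
  funext s
  rcases s with p | j
  · show uvec n ((τf (n := n)).symm (Sum.inl p)) = _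
    unfold uvec; rw [τ_inl]
    fin_cases p <;> simp
  · show uvec n ((τf (n := n)).symm (Sum.inr j)) = _
    unfold uvec; rw [τ_inr]
    split_ifs with h h2 h2 <;> simp_all

/-! ### Block gadgets -/

def d2v : Fin 2 → ℝ := fun p => if p = 0 then -1 else 1
def D2 : Matrix (Fin 2) (Fin 2) ℝ := Matrix.diagonal d2v
def Nm : Matrix (Fin 2) (Fin 2) ℝ := Matrix.of fun _ q => if q = 0 then (1:ℝ) else -1
def Wm : Matrix (Fin 2) (Fin 2) ℝ := Matrix.of fun p q => d2v p * d2v q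
def Tm (h : ℝ) : Matrix (Fin 2) (Fin 2) ℝ := 1 + (h/2) • Nm

def Um (c : Fin n → ℝ) : Matrix (Fin 2) (Fin n) ℝ := Matrix.of fun _ k => c k
def Vm (x : Fin n → ℝ) : Matrix (Fin n) (Fin 2) ℝ := Matrix.of fun k p => d2v p * x k

def hq (a : Fin n → ℝ) : ℝ := a ⬝ᵥ (Qm 1 n).mulVec a
def cvec (a : Fin n → ℝ) (B : Matrix (Fin n) (Fin n) ℝ) : Fin n → ℝ :=
  -((Bᵀ * Qm 1 n).mulVec a)

lemma Nm_mul_Nm : Nm * Nm = (0 : Matrix (Fin 2) (Fin 2) ℝ) := by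
  ext p q; simp [Nm, Matrix.mul_apply, Fin.sum_univ_two]

lemma Tm_mul (h h' : ℝ) : Tm h * Tm h' = Tm (h + h') := by
  ext p q
  fin_cases p <;> fin_cases q <;>
    simp [Tm, Nm, Matrix.mul_apply, Fin.sum_univ_two, Matrix.one_apply] <;> ring

lemma Tm_add_smul_Nm (h t : ℝ) : Tm h + t • Nm = Tm (h + 2*t) := by
  ext p q
  fin_cases p <;> fin_cases q <;>
    simp [Tm, Nm, Matrix.one_apply] <;> ring

lemma det_Tm (h : ℝ) : (Tm h).det = 1 := by
  rw [Matrix.det_fin_two]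
  simp [Tm, Nm, Matrix.one_apply]
  ring

lemma Um_add (c c' : Fin n → ℝ) : Um (c + c') = Um c + Um c' := by
  ext p k; simp [Um]

lemma Vm_add (x y : Fin n → ℝ) : Vm (x + y) = Vm x + Vm y := by
  ext k p; simp [Vm]; ring

lemma Vm_neg (x : Fin n → ℝ) : Vm (-x) = -(Vm x) := by
  ext k p; simp [Vm]

lemma Um_mul_B (c : Fin n → ℝ) (B : Matrix (Fin n) (Fin n) ℝ) :
    Um c * B = Um (Bᵀ.mulVec c) := by
  ext p k
  simp [Um, Matrix.mul_apply, Matrix.mulVec, dotProduct, Matrix.transpose_apply, mul_comm]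

lemma Tm_mul_Um (h : ℝ) (c : Fin n → ℝ) : Tm h * Um c = Um c := by
  ext p k
  fin_cases p <;>
    simp [Tm, Um, Nm, Matrix.mul_apply, Fin.sum_univ_two, Matrix.one_apply] <;> ring

lemma Um_mul_Vm (c x : Fin n → ℝ) : Um c * Vm x = (-(c ⬝ᵥ x)) • Nm := by
  ext p q
  fin_cases q <;>
    simp [Um, Vm, Nm, d2v, Matrix.mul_apply, dotProduct, Finset.sum_mul, Finset.mul_sum] <;>
    exact Finset.sum_congr rfl fun i _ => by ring

lemma Vm_mul_Um (x : Fin n → ℝ) (c : Fin n → ℝ) : Vm x * Um c = 0 := by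
  ext k l
  simp [Vm, Um, Matrix.mul_apply, Fin.sum_univ_two, d2v]

lemma Vm_mul_Tm (x : Fin n → ℝ) (h : ℝ) : Vm x * Tm h = Vm x := by
  ext k p
  fin_cases p <;>
    simp [Tm, Vm, Nm, Matrix.mul_apply, Fin.sum_univ_two, Matrix.one_apply, d2v] <;> ring

lemma M_mul_Vm (M : Matrix (Fin n) (Fin n) ℝ) (x : Fin n → ℝ) :
    M * Vm x = Vm (M.mulVec x) := by
  ext k p
  simp [Vm, Matrix.mul_apply, Matrix.mulVec, dotProduct, Finset.mul_sum]
  exact Finset.sum_congr rfl fun i _ => by ring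

lemma VmT_mul_M (M : Matrix (Fin n) (Fin n) ℝ) (x : Fin n → ℝ) :
    (Vm x)ᵀ * M = (Vm (Mᵀ.mulVec x))ᵀ := by
  have h1 : (Vm x)ᵀ * M = (Mᵀ * Vm x)ᵀ := by
    rw [Matrix.transpose_mul, Matrix.transpose_transpose]
  rw [h1, M_mul_Vm]

lemma VmT_mul_Vm (x y : Fin n → ℝ) : (Vm x)ᵀ * Vm y = (x ⬝ᵥ y) • Wm := by
  ext p q
  simp [Vm, Wm, Matrix.mul_apply, Matrix.transpose_apply, dotProduct, Finset.sum_mul,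
    Finset.mul_sum]
  exact Finset.sum_congr rfl fun i _ => by ring

lemma D2_mul_Um (c : Fin n → ℝ) : D2 * Um c = (Vm c)ᵀ := by
  ext p k
  simp [D2, Um, Vm, Matrix.diagonal_mul, Matrix.transpose_apply]

lemma TmT_D2_Tm (h : ℝ) : (Tm h)ᵀ * (D2 * Tm h) = D2 - h • Wm := by
  ext p q
  fin_cases p <;> fin_cases q <;>
    simp [Tm, D2, Nm, Wm, d2v, Matrix.mul_apply, Fin.sum_univ_two, Matrix.one_apply,
      Matrix.diagonal] <;> ring

/-! ### The block matrix of a Poincaré transformation -/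

def Qbσ (n : ℕ) : Matrix (Fin 2 ⊕ Fin n) (Fin 2 ⊕ Fin n) ℝ :=
  Matrix.fromBlocks D2 0 0 (Qm 1 n)

def blockMat (a : Fin n → ℝ) (B : Matrix (Fin n) (Fin n) ℝ) :
    Matrix (Fin 2 ⊕ Fin n) (Fin 2 ⊕ Fin n) ℝ :=
  Matrix.fromBlocks (Tm (hq a)) (Um (cvec a B)) (Vm a) B

lemma sgn_σ_inl0 (hn : 0 < n) : sgn 2 (n+2) ((σf hn).symm (Sum.inl 0)) = -1 := by
  unfold sgn; rw [if_pos]; rw [σ_inl0]; omega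

lemma sgn_σ_inl1 (hn : 0 < n) : sgn 2 (n+2) ((σf hn).symm (Sum.inl 1)) = 1 := by
  unfold sgn; rw [if_neg]; rw [σ_inl1]; omega

lemma Qm_σ (hn : 0 < n) : Qm 2 (n+2) = (Qbσ n).submatrix (σf hn) (σf hn) := by
  have inj := (σf hn).symm.injective
  have key : ∀ s t, Qm 2 (n+2) ((σf hn).symm s) ((σf hn).symm t) = Qbσ n s t := by
    intro s t
    unfold Qm
    rcases s with p | j <;> rcases t with q | k
    · by_cases h : p = q
      · subst h
        rw [Matrix.diagonal_apply_eq]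
        fin_cases p
        · exact (sgn_σ_inl0 hn).trans (by simp [Qbσ, D2, d2v, Matrix.diagonal_apply])
        · exact (sgn_σ_inl1 hn).trans (by simp [Qbσ, D2, d2v, Matrix.diagonal_apply])
      · rw [Matrix.diagonal_apply_ne _ (inj.ne (by simp [h]))]
        simp [Qbσ, D2, Matrix.diagonal_apply, h]
    · rw [Matrix.diagonal_apply_ne _ (inj.ne (by simp))]
      simp [Qbσ]
    · rw [Matrix.diagonal_apply_ne _ (inj.ne (by simp))]
      simp [Qbσ]
    · by_cases h : j = k
      · subst h
        rw [Matrix.diagonal_apply_eq, sgn_σ_inr hn]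
        simp [Qbσ, Qm, Matrix.diagonal_apply_eq]
      · rw [Matrix.diagonal_apply_ne _ (inj.ne (by simp [h]))]
        simp [Qbσ, Qm, Matrix.diagonal_apply_ne _ h]
  ext i j
  rw [Matrix.submatrix_apply]
  have := key ((σf hn) i) ((σf hn) j)
  simpa using this

def Qbτ (n : ℕ) : Matrix (Fin 2 ⊕ Fin n) (Fin 2 ⊕ Fin n) ℝ :=
  Matrix.fromBlocks (-1) 0 0 1

lemma Qm_τ : Qm 2 (n+2) = (Qbτ n).submatrix (τf (n := n)) (τf (n := n)) := by
  have inj := (τf (n := n)).symm.injective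
  have key : ∀ s t, Qm 2 (n+2) ((τf (n:=n)).symm s) ((τf (n:=n)).symm t) = Qbτ n s t := by
    intro s t
    unfold Qm
    rcases s with p | j <;> rcases t with q | k
    · by_cases h : p = q
      · subst h
        rw [Matrix.diagonal_apply_eq]
        have : sgn 2 (n+2) ((τf (n:=n)).symm (Sum.inl p)) = -1 := by
          unfold sgn; rw [if_pos]; rw [τ_inl]; exact p.isLt
        rw [this]; simp [Qbτ, Matrix.one_apply]
      · rw [Matrix.diagonal_apply_ne _ (inj.ne (by simp [h]))]
        simp [Qbτ, Matrix.one_apply, h]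
    · rw [Matrix.diagonal_apply_ne _ (inj.ne (by simp))]; simp [Qbτ]
    · rw [Matrix.diagonal_apply_ne _ (inj.ne (by simp))]; simp [Qbτ]
    · by_cases h : j = k
      · subst h
        rw [Matrix.diagonal_apply_eq]
        have : sgn 2 (n+2) ((τf (n:=n)).symm (Sum.inr j)) = 1 := by
          unfold sgn; rw [if_neg]; rw [τ_inr]; omega
        rw [this]; simp [Qbτ, Matrix.one_apply]
      · rw [Matrix.diagonal_apply_ne _ (inj.ne (by simp [h]))]
        simp [Qbτ, Matrix.one_apply, h]
  ext i j
  rw [Matrix.submatrix_apply]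
  have := key ((τf (n:=n)) i) ((τf (n:=n)) j)
  simpa using this

lemma dot_equiv {α β : Type*} [Fintype α] [Fintype β] (e : α ≃ β) (x y : α → ℝ) :
    x ⬝ᵥ y = (x ∘ e.symm) ⬝ᵥ (y ∘ e.symm) :=
  Fintype.sum_equiv e _ _ (by intro i; simp)

variable {a a' : Fin n → ℝ} {B B' : Matrix (Fin n) (Fin n) ℝ}

lemma hq_mulVec (hB : Bᵀ * Qm 1 n * B = Qm 1 n) (x : Fin n → ℝ) :
    hq (B.mulVec x) = hq x := by
  unfold hq
  rw [mulVec_dot_mulVec, hB]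

lemma cross (x : Fin n → ℝ) :
    cvec a B ⬝ᵥ x = -(a ⬝ᵥ (Qm 1 n).mulVec (B.mulVec x)) := by
  unfold cvec
  rw [neg_dotProduct, mulVec_dot, Matrix.transpose_mul, Matrix.transpose_transpose,
    Qm_symm, ← Matrix.mulVec_mulVec]

lemma hq_add_mulVec (hB : Bᵀ * Qm 1 n * B = Qm 1 n) :
    hq (a + B.mulVec a') = hq a + hq a' + 2 * (a ⬝ᵥ (Qm 1 n).mulVec (B.mulVec a')) := by
  have h2 : (B.mulVec a') ⬝ᵥ (Qm 1 n).mulVec (B.mulVec a') = hq a' := hq_mulVec hB a'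
  have h3 : (B.mulVec a') ⬝ᵥ (Qm 1 n).mulVec a = a ⬝ᵥ (Qm 1 n).mulVec (B.mulVec a') :=
    diag_dot_comm _ _ _
  unfold hq
  rw [Matrix.mulVec_add, dotProduct_add, add_dotProduct, add_dotProduct, h2, h3]
  ring_nf
  rfl

lemma cvec_comp (hB : Bᵀ * Qm 1 n * B = Qm 1 n) :
    cvec (a + B.mulVec a') (B * B') = cvec a' B' + B'ᵀ.mulVec (cvec a B) := by
  unfold cvec
  rw [Matrix.transpose_mul, Matrix.mulVec_add]
  have e1 : (B'ᵀ * Bᵀ * Qm 1 n).mulVec a = B'ᵀ.mulVec ((Bᵀ * Qm 1 n).mulVec a) := by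
    rw [Matrix.mulVec_mulVec, Matrix.mul_assoc]
  have e2 : (B'ᵀ * Bᵀ * Qm 1 n).mulVec (B.mulVec a') = (B'ᵀ * Qm 1 n).mulVec a' := by
    rw [Matrix.mulVec_mulVec, Matrix.mul_assoc, Matrix.mul_assoc, ← Matrix.mul_assoc Bᵀ, hB]
  rw [e1, e2]
  rw [neg_add]
  rw [Matrix.mulVec_neg]
  ring_nf

lemma blockMat_mul (hB : Bᵀ * Qm 1 n * B = Qm 1 n) :
    blockMat a B * blockMat a' B' = blockMat (a + B.mulVec a') (B * B') := by
  unfold blockMat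
  rw [Matrix.fromBlocks_multiply]
  have b11 : Tm (hq a) * Tm (hq a') + Um (cvec a B) * Vm a' = Tm (hq (a + B.mulVec a')) := by
    rw [Tm_mul, Um_mul_Vm, Tm_add_smul_Nm, cross, hq_add_mulVec hB]
    ring_nf
  have b12 : Tm (hq a) * Um (cvec a' B') + Um (cvec a B) * B' =
      Um (cvec (a + B.mulVec a') (B * B')) := by
    rw [Tm_mul_Um, Um_mul_B, cvec_comp hB, Um_add]
  have b21 : Vm a * Tm (hq a') + B * Vm a' = Vm (a + B.mulVec a') := by
    rw [Vm_mul_Tm, M_mul_Vm, Vm_add]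
  have b22 : Vm a * Um (cvec a' B') + B * B' = B * B' := by rw [Vm_mul_Um, zero_add]
  rw [b11, b12, b21, b22]

lemma TmT_mul_VmT (h : ℝ) (x : Fin n → ℝ) : (Tm h)ᵀ * (Vm x)ᵀ = (Vm x)ᵀ := by
  rw [← Matrix.transpose_mul, Vm_mul_Tm]

lemma UmT_D2_Tm (c : Fin n → ℝ) (h : ℝ) : (Um c)ᵀ * (D2 * Tm h) = Vm c := by
  ext k p
  fin_cases p <;>
    simp [Um, Vm, Tm, Nm, D2, d2v, Matrix.diagonal, Matrix.mul_apply, Fin.sum_univ_two,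
      Matrix.one_apply] <;> ring

lemma UmT_mul_VmT (c x : Fin n → ℝ) : (Um c)ᵀ * (Vm x)ᵀ = 0 := by
  rw [← Matrix.transpose_mul, Vm_mul_Um, Matrix.transpose_zero]

lemma cvec_BtJ (a : Fin n → ℝ) (B : Matrix (Fin n) (Fin n) ℝ) :
    (Bᵀ * Qm 1 n).mulVec a = -(cvec a B) := by
  unfold cvec; rw [neg_neg]

lemma blockMat_form (hB : Bᵀ * Qm 1 n * B = Qm 1 n) :
    (blockMat a B)ᵀ * Qbσ n * blockMat a B = Qbσ n := by
  unfold blockMat Qbσ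
  rw [Matrix.fromBlocks_transpose, Matrix.fromBlocks_multiply, Matrix.fromBlocks_multiply]
  simp only [Matrix.zero_mul, Matrix.mul_zero, add_zero, zero_add, Matrix.mul_assoc]
  have b11 : (Tm (hq a))ᵀ * (D2 * Tm (hq a)) + (Vm a)ᵀ * ((Qm 1 n) * Vm a) = D2 := by
    rw [TmT_D2_Tm, M_mul_Vm, VmT_mul_Vm]
    rw [show (a ⬝ᵥ (Qm 1 n).mulVec a) = hq a from rfl]
    rw [sub_add_cancel]
  have b12 : (Tm (hq a))ᵀ * (D2 * Um (cvec a B)) + (Vm a)ᵀ * ((Qm 1 n) * B) = 0 := by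
    rw [D2_mul_Um, TmT_mul_VmT, VmT_mul_M, Matrix.transpose_mul, Qm_symm, cvec_BtJ,
      Vm_neg, Matrix.transpose_neg, add_neg_cancel]
  have b21 : (Um (cvec a B))ᵀ * (D2 * Tm (hq a)) + Bᵀ * ((Qm 1 n) * Vm a) = 0 := by
    rw [UmT_D2_Tm, M_mul_Vm, M_mul_Vm, Matrix.mulVec_mulVec, cvec_BtJ, Vm_neg,
      add_neg_cancel]
  have b22 : (Um (cvec a B))ᵀ * (D2 * Um (cvec a B)) + Bᵀ * ((Qm 1 n) * B) = Qm 1 n := by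
    rw [D2_mul_Um, UmT_mul_VmT, ← Matrix.mul_assoc, hB, zero_add]
  rw [b11, b12, b21, b22]

lemma blockMat_mulVec_u : (blockMat a B).mulVec (U0 n) = U0 n := by
  unfold blockMat U0
  rw [Matrix.fromBlocks_mulVec]
  have h1 : (Sum.elim (fun _ => (1:ℝ)) (fun _ => (0:ℝ)) : Fin 2 ⊕ Fin n → ℝ) ∘ Sum.inl
      = fun _ => 1 := rfl
  have h2 : (Sum.elim (fun _ => (1:ℝ)) (fun _ => (0:ℝ)) : Fin 2 ⊕ Fin n → ℝ) ∘ Sum.inr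
      = fun _ => 0 := rfl
  rw [h1, h2]
  have h3 : (fun _ : Fin n => (0:ℝ)) = 0 := rfl
  rw [h3, Matrix.mulVec_zero, Matrix.mulVec_zero, add_zero, add_zero]
  have h4 : Tm (hq a) *ᵥ (fun _ => (1:ℝ)) = fun _ => 1 := by
    funext p
    fin_cases p <;> simp [Tm, Nm, Matrix.mulVec, dotProduct, Fin.sum_univ_two,
      Matrix.one_apply] <;> ring
  have h5 : Vm a *ᵥ (fun _ => (1:ℝ)) = fun _ => 0 := by
    funext k
    simp [Vm, Matrix.mulVec, dotProduct, Fin.sum_univ_two, d2v]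
  rw [h4, h5]
  rfl

lemma blockMat_det (hB : Bᵀ * Qm 1 n * B = Qm 1 n) : (blockMat a B).det = B.det := by
  have hL : (Qm 1 n * Bᵀ * Qm 1 n) * B = 1 := by
    rw [Matrix.mul_assoc, Matrix.mul_assoc, ← Matrix.mul_assoc Bᵀ, hB, Qm_sq]
  have hR : B * (Qm 1 n * Bᵀ * Qm 1 n) = 1 := mul_eq_one_comm.mp hL
  letI iB : Invertible B := ⟨Qm 1 n * Bᵀ * Qm 1 n, hL, hR⟩
  unfold blockMat
  rw [Matrix.det_fromBlocks₂₂]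
  have e1 : Um (cvec a B) * ⅟B * Vm a = (hq a) • Nm := by
    rw [Matrix.mul_assoc, M_mul_Vm, Um_mul_Vm, cross,
      show B.mulVec ((⅟B).mulVec a) = a from by
        rw [Matrix.mulVec_mulVec, mul_invOf_self, Matrix.one_mulVec]]
    rw [show (a ⬝ᵥ (Qm 1 n).mulVec a) = hq a from rfl, neg_neg]
  rw [e1]
  have e2 : Tm (hq a) - (hq a) • Nm = Tm (-(hq a)) := by
    rw [sub_eq_add_neg, ← neg_smul, Tm_add_smul_Nm]
    ring_nf
  rw [e2, det_Tm, mul_one]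

/-! ### Extraction -/

lemma qsum (f : Fin 2 ⊕ Fin n → ℝ) :
    ∑ s, f s = f (Sum.inl 0) + f (Sum.inl 1) + ∑ j, f (Sum.inr j) := by
  rw [Fintype.sum_sum_type, Fin.sum_univ_two]

lemma Qbσ_diag : Qbσ n = Matrix.diagonal (Sum.elim d2v (sgn 1 n)) := by
  ext s t
  rcases s with p|j <;> rcases t with q|k
  · by_cases h : p = q
    · subst h; simp [Qbσ, D2, Matrix.diagonal_apply]
    · simp [Qbσ, D2, Matrix.diagonal_apply, h]
  · simp [Qbσ, Matrix.diagonal_apply]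
  · simp [Qbσ, Matrix.diagonal_apply]
  · by_cases h : j = k
    · subst h; simp [Qbσ, Qm, Matrix.diagonal_apply]
    · simp [Qbσ, Qm, Matrix.diagonal_apply, h]

lemma cvec_apply (a : Fin n → ℝ) (B : Matrix (Fin n) (Fin n) ℝ) (k : Fin n) :
    cvec a B k = -∑ j, sgn 1 n j * B j k * a j := by
  have hm : (Bᵀ * Qm 1 n) = Matrix.of fun k j => B j k * sgn 1 n j := by
    unfold Qm
    ext k j
    rw [Matrix.mul_diagonal]
    rfl
  unfold cvec
  rw [hm]
  simp only [Pi.neg_apply, Matrix.mulVec, dotProduct, Matrix.of_apply, neg_inj]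
  exact Finset.sum_congr rfl fun j _ => by ring

lemma hq_apply (a : Fin n → ℝ) : hq a = ∑ j, sgn 1 n j * (a j * a j) := by
  simp [hq, Qm, dotProduct, Matrix.mulVec_diagonal]
  exact Finset.sum_congr rfl fun j _ => by ring

variable {N : Matrix (Fin 2 ⊕ Fin n) (Fin 2 ⊕ Fin n) ℝ}

lemma extract (hu : N.mulVec (U0 n) = U0 n) (hf : Nᵀ * Qbσ n * N = Qbσ n) :
    ((Matrix.of fun j k => N (Sum.inr j) (Sum.inr k))ᵀ * Qm 1 n *
        (Matrix.of fun j k => N (Sum.inr j) (Sum.inr k)) = Qm 1 n) ∧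
    N = blockMat (fun j => N (Sum.inr j) (Sum.inl 1))
        (Matrix.of fun j k => N (Sum.inr j) (Sum.inr k)) := by
  set a : Fin n → ℝ := fun j => N (Sum.inr j) (Sum.inl 1) with ha
  set B : Matrix (Fin n) (Fin n) ℝ := Matrix.of fun j k => N (Sum.inr j) (Sum.inr k) with hBdef
  have F1 : ∀ s, N s (Sum.inl 0) + N s (Sum.inl 1) = U0 n s := by
    intro s
    have h := congrFun hu s
    simp only [Matrix.mulVec, dotProduct] at h
    rw [qsum] at h
    simpa [U0] using h
  have hw : Nᵀ.mulVec (Sum.elim d2v (fun _ => (0:ℝ))) = Sum.elim d2v (fun _ => (0:ℝ)) := by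
    have wval : (Qbσ n).mulVec (U0 n) = Sum.elim d2v (fun _ => (0:ℝ)) := by
      rw [Qbσ_diag]
      funext s
      rcases s with p|j <;> simp [Matrix.mulVec_diagonal, U0]
    have e : Nᵀ.mulVec ((Qbσ n).mulVec (N.mulVec (U0 n))) = (Qbσ n).mulVec (U0 n) := by
      rw [Matrix.mulVec_mulVec, Matrix.mulVec_mulVec, hf]
    rw [hu, wval] at e
    exact e
  have F2 : ∀ t, -(N (Sum.inl 0) t) + N (Sum.inl 1) t
      = Sum.elim d2v (fun _ : Fin n => (0:ℝ)) t := by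
    intro t
    have h := congrFun hw t
    simp only [Matrix.mulVec, dotProduct, Matrix.transpose_apply] at h
    rw [qsum] at h
    simp only [Sum.elim_inl, Sum.elim_inr, mul_zero, Finset.sum_const_zero, add_zero] at h
    rw [show d2v 0 = -1 from by norm_num [d2v], show d2v 1 = 1 from by norm_num [d2v]] at h
    rw [← h]
    ring
  have ENT : ∀ t t', -(N (Sum.inl 0) t * N (Sum.inl 0) t')
      + N (Sum.inl 1) t * N (Sum.inl 1) t'
      + ∑ j, sgn 1 n j * (N (Sum.inr j) t * N (Sum.inr j) t') = Qbσ n t t' := by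
    intro t t'
    have h := congrFun (congrFun hf t) t'
    rw [Matrix.mul_assoc, Qbσ_diag] at h
    rw [Matrix.mul_apply] at h
    simp only [Matrix.diagonal_mul, Matrix.transpose_apply] at h
    rw [qsum] at h
    rw [← Qbσ_diag] at h
    simp only [Sum.elim_inl, Sum.elim_inr] at h
    rw [show d2v 0 = -1 from by norm_num [d2v], show d2v 1 = 1 from by norm_num [d2v]] at h
    have hs : ∑ j, sgn 1 n j * (N (Sum.inr j) t * N (Sum.inr j) t')
        = ∑ x, N (Sum.inr x) t * (sgn 1 n x * N (Sum.inr x) t') :=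
      Finset.sum_congr rfl fun j _ => by ring
    rw [← h, hs]
    ring
  have h11 : N (Sum.inl 1) (Sum.inl 1) = N (Sum.inl 0) (Sum.inl 1) + 1 := by
    have hh := F2 (Sum.inl 1)
    rw [Sum.elim_inl, show d2v 1 = 1 from by norm_num [d2v]] at hh
    linarith
  have hβ : N (Sum.inl 0) (Sum.inl 1) = -(hq a)/2 := by
    have E := ENT (Sum.inl 1) (Sum.inl 1)
    have q11 : Qbσ n (Sum.inl 1) (Sum.inl 1) = 1 := by
      simp [Qbσ, D2, Matrix.diagonal_apply, d2v]
    have hqa : ∑ j, sgn 1 n j * (N (Sum.inr j) (Sum.inl 1) * N (Sum.inr j) (Sum.inl 1))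
        = hq a := (hq_apply a).symm
    rw [q11, h11, hqa] at E
    ring_nf at E ⊢
    linarith
  have h10 : N (Sum.inl 1) (Sum.inl 0) = hq a / 2 := by
    have hh := F1 (Sum.inl 1)
    have : U0 n (Sum.inl 1) = 1 := rfl
    rw [this] at hh
    rw [h11, hβ] at hh
    linarith
  have h00 : N (Sum.inl 0) (Sum.inl 0) = 1 + hq a / 2 := by
    have hh := F1 (Sum.inl 0)
    have : U0 n (Sum.inl 0) = 1 := rfl
    rw [this, hβ] at hh
    linarith
  have h01 : ∀ k, N (Sum.inl 1) (Sum.inr k) = N (Sum.inl 0) (Sum.inr k) := by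
    intro k
    have hh := F2 (Sum.inr k)
    rw [Sum.elim_inr] at hh
    linarith
  have hV : ∀ j, N (Sum.inr j) (Sum.inl 0) = -a j := by
    intro j
    have hh := F1 (Sum.inr j)
    have : U0 n (Sum.inr j) = 0 := rfl
    rw [this] at hh
    simp only [ha]
    linarith
  have hγ : ∀ k, N (Sum.inl 0) (Sum.inr k) = cvec a B k := by
    intro k
    have E := ENT (Sum.inr k) (Sum.inl 1)
    have q0 : Qbσ n (Sum.inr k) (Sum.inl 1) = 0 := by simp [Qbσ]
    rw [q0, h11, h01 k] at E
    rw [cvec_apply]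
    have hBa : ∀ j, N (Sum.inr j) (Sum.inr k) = B j k := fun j => rfl
    have hs2 : ∑ j, sgn 1 n j * (N (Sum.inr j) (Sum.inr k) * N (Sum.inr j) (Sum.inl 1))
        = ∑ j, sgn 1 n j * B j k * a j := by
      refine Finset.sum_congr rfl fun j _ => ?_
      rw [hBa j]
      simp only [ha]
      ring
    rw [hs2] at E
    linarith
  have hBform : Bᵀ * Qm 1 n * B = Qm 1 n := by
    ext k l
    have E := ENT (Sum.inr k) (Sum.inr l)
    have qrr : Qbσ n (Sum.inr k) (Sum.inr l) = Qm 1 n k l := by simp [Qbσ]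
    rw [qrr, h01 k, h01 l, hγ k, hγ l] at E
    have lhs : (Bᵀ * Qm 1 n * B) k l = ∑ j, sgn 1 n j * (N (Sum.inr j) (Sum.inr k)
        * N (Sum.inr j) (Sum.inr l)) := by
      rw [Matrix.mul_assoc, Matrix.mul_apply]
      unfold Qm
      simp only [Matrix.diagonal_mul, Matrix.transpose_apply]
      exact Finset.sum_congr rfl fun j _ => by rw [show B j k = N (Sum.inr j) (Sum.inr k) from rfl,
        show B j l = N (Sum.inr j) (Sum.inr l) from rfl]; ring
    rw [lhs]
    linarith
  refine ⟨hBform, ?_⟩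
  ext s t
  rcases s with p|j <;> rcases t with q|k
  · fin_cases p <;> fin_cases q <;>
      simp [blockMat, Tm, Nm, Um, Vm, Matrix.one_apply, h00, hβ, h10, h11] <;> ring
  · have c0 : N (Sum.inl 0) (Sum.inr k) = blockMat a B (Sum.inl 0) (Sum.inr k) := by
      rw [show blockMat a B (Sum.inl 0) (Sum.inr k) = cvec a B k from rfl]
      exact hγ k
    have c1 : N (Sum.inl 1) (Sum.inr k) = blockMat a B (Sum.inl 1) (Sum.inr k) := by
      rw [show blockMat a B (Sum.inl 1) (Sum.inr k) = cvec a B k from rfl, h01 k]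
      exact hγ k
    fin_cases p
    · exact c0
    · exact c1
  · have c0 : N (Sum.inr j) (Sum.inl 0) = blockMat a B (Sum.inr j) (Sum.inl 0) := by
      rw [show blockMat a B (Sum.inr j) (Sum.inl 0) = d2v 0 * a j from rfl,
        show d2v 0 = -1 from by norm_num [d2v], hV j]
      ring
    have c1 : N (Sum.inr j) (Sum.inl 1) = blockMat a B (Sum.inr j) (Sum.inl 1) := by
      rw [show blockMat a B (Sum.inr j) (Sum.inl 1) = d2v 1 * a j from rfl,
        show d2v 1 = 1 from by norm_num [d2v]]
      simp only [ha]
      ring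
    fin_cases q
    · exact c0
    · exact c1
  · rfl

/-! ### Part 5: the standard-case isomorphism -/

def standardMat (hn : 0 < n) (a : Fin n → ℝ) (B : Matrix (Fin n) (Fin n) ℝ) :
    Matrix (Fin (n+2)) (Fin (n+2)) ℝ :=
  (blockMat a B).submatrix (σf hn) (σf hn)

lemma standardMat_mul (hn : 0 < n) (hB : Bᵀ * Qm 1 n * B = Qm 1 n) :
    standardMat hn a B * standardMat hn a' B'
      = standardMat hn (a + B.mulVec a') (B * B') := by
  unfold standardMat
  rw [Matrix.submatrix_mul_equiv, blockMat_mul hB]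

lemma blockMat_one : blockMat (0 : Fin n → ℝ) (1 : Matrix (Fin n) (Fin n) ℝ) = 1 := by
  have h1 : hq (0 : Fin n → ℝ) = 0 := by simp [hq]
  have h2 : cvec (0 : Fin n → ℝ) 1 = 0 := by simp [cvec]
  have h3 : Tm 0 = 1 := by simp [Tm]
  have h4 : Um (0 : Fin n → ℝ) = 0 := by ext p k; simp [Um]
  have h5 : Vm (0 : Fin n → ℝ) = 0 := by ext k p; simp [Vm]
  unfold blockMat
  rw [h1, h2, h3, h4, h5, Matrix.fromBlocks_one]

lemma standardMat_one (hn : 0 < n) : standardMat hn 0 1 = 1 := by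
  unfold standardMat; rw [blockMat_one]; exact Matrix.submatrix_one_equiv _

lemma standardMat_form (hn : 0 < n) (hB : Bᵀ * Qm 1 n * B = Qm 1 n) :
    (standardMat hn a B)ᵀ * Qm 2 (n+2) * standardMat hn a B = Qm 2 (n+2) := by
  unfold standardMat
  rw [Qm_σ hn, Matrix.transpose_submatrix, Matrix.submatrix_mul_equiv,
    Matrix.submatrix_mul_equiv, blockMat_form hB]

lemma uvec_eq_U0_comp (hn : 0 < n) : uvec n = U0 n ∘ ⇑(σf hn) := by
  funext i
  have := congrFun (uvec_σ hn) ((σf hn) i)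
  simpa using this

lemma standardMat_mulVec_uvec (hn : 0 < n) :
    (standardMat hn a B).mulVec (uvec n) = uvec n := by
  unfold standardMat
  rw [uvec_eq_U0_comp hn, Matrix.submatrix_mulVec_equiv]
  have hv : (U0 n ∘ ⇑(σf hn)) ∘ ⇑(σf hn).symm = U0 n := by
    funext s; simp [Function.comp]
  rw [hv, blockMat_mulVec_u]

lemma standardMat_det (hn : 0 < n) (hB : Bᵀ * Qm 1 n * B = Qm 1 n) :
    (standardMat hn a B).det = B.det := by
  unfold standardMat
  rw [Matrix.det_submatrix_equiv_self, blockMat_det hB]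

def aOf (hn : 0 < n) (A : Matrix (Fin (n+2)) (Fin (n+2)) ℝ) : Fin n → ℝ :=
  fun j => A ((σf hn).symm (Sum.inr j)) ((σf hn).symm (Sum.inl 1))

def BOf (hn : 0 < n) (A : Matrix (Fin (n+2)) (Fin (n+2)) ℝ) : Matrix (Fin n) (Fin n) ℝ :=
  Matrix.of fun j k => A ((σf hn).symm (Sum.inr j)) ((σf hn).symm (Sum.inr k))

lemma extract' (hn : 0 < n) (A : Matrix (Fin (n+2)) (Fin (n+2)) ℝ)
    (hu : A.mulVec (uvec n) = uvec n)
    (hf : Aᵀ * Qm 2 (n+2) * A = Qm 2 (n+2)) :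
    ((BOf hn A)ᵀ * Qm 1 n * BOf hn A = Qm 1 n) ∧
      A = standardMat hn (aOf hn A) (BOf hn A) := by
  set N := A.submatrix ⇑(σf hn).symm ⇑(σf hn).symm with hNdef
  have hN_u : N.mulVec (U0 n) = U0 n := by
    rw [hNdef, Matrix.submatrix_mulVec_equiv, Equiv.symm_symm, ← uvec_eq_U0_comp hn, hu,
      uvec_σ hn]
  have hQb : Qbσ n = (Qm 2 (n+2)).submatrix ⇑(σf hn).symm ⇑(σf hn).symm := by
    rw [Qm_σ hn, Matrix.submatrix_submatrix, Equiv.self_comp_symm, Matrix.submatrix_id_id]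
  have hN_f : Nᵀ * Qbσ n * N = Qbσ n := by
    rw [hNdef, hQb, Matrix.transpose_submatrix, Matrix.submatrix_mul_equiv,
      Matrix.submatrix_mul_equiv, hf]
  obtain ⟨hB, hNeq⟩ := extract hN_u hN_f
  have hA : A = N.submatrix ⇑(σf hn) ⇑(σf hn) := by
    rw [hNdef, Matrix.submatrix_submatrix, Equiv.symm_comp_self, Matrix.submatrix_id_id]
  refine ⟨hB, ?_⟩
  conv_lhs => rw [hA, hNeq]
  rfl

lemma aOf_standard (hn : 0 < n) (a : Fin n → ℝ) (B : Matrix (Fin n) (Fin n) ℝ) :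
    aOf hn (standardMat hn a B) = a := by
  funext j
  unfold aOf standardMat
  rw [Matrix.submatrix_apply, Equiv.apply_symm_apply, Equiv.apply_symm_apply]
  show Vm a j 1 = a j
  norm_num [Vm, d2v]

lemma BOf_standard (hn : 0 < n) (a : Fin n → ℝ) (B : Matrix (Fin n) (Fin n) ℝ) :
    BOf hn (standardMat hn a B) = B := by
  ext j k
  unfold BOf standardMat
  rw [Matrix.of_apply, Matrix.submatrix_apply, Equiv.apply_symm_apply, Equiv.apply_symm_apply]
  rfl

lemma mem_specialIsometry_matrix {k m : ℕ} {Bu : (Matrix (Fin m) (Fin m) ℝ)ˣ}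
    (h : Bu ∈ specialIsometry k m) :
    ((Bu : Matrix (Fin m) (Fin m) ℝ))ᵀ * Qm k m * (Bu : Matrix (Fin m) (Fin m) ℝ)
      = Qm k m :=
  (formPres_iff k m _).mp h.2

def ψu (hn : 0 < n) (a : Fin n → ℝ) (Bu : (Matrix (Fin n) (Fin n) ℝ)ˣ)
    (hB : Bu ∈ specialIsometry 1 n) : (Matrix (Fin (n+2)) (Fin (n+2)) ℝ)ˣ where
  val := standardMat hn a (Bu : Matrix (Fin n) (Fin n) ℝ)
  inv := standardMat hn (-(((Bu⁻¹ : (Matrix (Fin n) (Fin n) ℝ)ˣ) :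
      Matrix (Fin n) (Fin n) ℝ).mulVec a))
    ((Bu⁻¹ : (Matrix (Fin n) (Fin n) ℝ)ˣ) : Matrix (Fin n) (Fin n) ℝ)
  val_inv := by
    have k1 : (Bu : Matrix (Fin n) (Fin n) ℝ) * ((Bu⁻¹ : _ˣ) : Matrix (Fin n) (Fin n) ℝ)
        = 1 := Bu.mul_inv
    rw [standardMat_mul hn (mem_specialIsometry_matrix hB)]
    have hv : a + (Bu : Matrix (Fin n) (Fin n) ℝ).mulVec
        (-((((Bu⁻¹ : _ˣ) : Matrix (Fin n) (Fin n) ℝ)).mulVec a)) = 0 := by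
      rw [Matrix.mulVec_neg, Matrix.mulVec_mulVec, k1, Matrix.one_mulVec]
      simp
    rw [hv, k1, standardMat_one hn]
  inv_val := by
    have k2 : ((Bu⁻¹ : _ˣ) : Matrix (Fin n) (Fin n) ℝ) * (Bu : Matrix (Fin n) (Fin n) ℝ)
        = 1 := Bu.inv_mul
    rw [standardMat_mul hn (mem_specialIsometry_matrix (inv_mem hB))]
    have hv : -((((Bu⁻¹ : _ˣ) : Matrix (Fin n) (Fin n) ℝ)).mulVec a)
        + ((Bu⁻¹ : _ˣ) : Matrix (Fin n) (Fin n) ℝ).mulVec a = 0 := by simp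
    rw [hv, k2, standardMat_one hn]

lemma ψu_mem (hn : 0 < n) (a : Fin n → ℝ) (Bu : (Matrix (Fin n) (Fin n) ℝ)ˣ)
    (hB : Bu ∈ specialIsometry 1 n) : ψu hn a Bu hB ∈ poincareGroup n (uvec n) := by
  rw [poincareGroup, Subgroup.mem_inf]
  constructor
  · refine ⟨?_, ?_⟩
    · show (standardMat hn a (Bu : Matrix (Fin n) (Fin n) ℝ)).det = 1
      rw [standardMat_det hn (mem_specialIsometry_matrix hB)]
      exact hB.1
    · intro x y
      have := standardMat_form (a := a) (B := (Bu : Matrix (Fin n) (Fin n) ℝ)) hn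
        (mem_specialIsometry_matrix hB)
      exact (formPres_iff 2 (n+2) _).mpr this x y
  · show (standardMat hn a (Bu : Matrix (Fin n) (Fin n) ℝ)).mulVec (uvec n) = uvec n
    exact standardMat_mulVec_uvec hn

-- properties of elements of the standard Poincaré group
section StdGroup
variable (hn : 0 < n) (A : ↥(poincareGroup n (uvec n)))

lemma A_stab : ((A : (Matrix (Fin (n+2)) (Fin (n+2)) ℝ)ˣ) :
    Matrix (Fin (n+2)) (Fin (n+2)) ℝ).mulVec (uvec n) = uvec n :=
  (Subgroup.mem_inf.mp A.2).2

lemma A_form : (((A : (Matrix (Fin (n+2)) (Fin (n+2)) ℝ)ˣ) :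
    Matrix (Fin (n+2)) (Fin (n+2)) ℝ))ᵀ * Qm 2 (n+2) *
    ((A : (Matrix (Fin (n+2)) (Fin (n+2)) ℝ)ˣ) : Matrix (Fin (n+2)) (Fin (n+2)) ℝ)
      = Qm 2 (n+2) :=
  (formPres_iff 2 (n+2) _).mp (Subgroup.mem_inf.mp A.2).1.2

lemma BOf_form : (BOf hn ((A : (Matrix (Fin (n+2)) (Fin (n+2)) ℝ)ˣ) :
    Matrix (Fin (n+2)) (Fin (n+2)) ℝ))ᵀ * Qm 1 n *
    BOf hn ((A : (Matrix (Fin (n+2)) (Fin (n+2)) ℝ)ˣ) : Matrix (Fin (n+2)) (Fin (n+2)) ℝ)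
      = Qm 1 n :=
  (extract' hn _ (A_stab A) (A_form A)).1

lemma A_decomp : ((A : (Matrix (Fin (n+2)) (Fin (n+2)) ℝ)ˣ) :
    Matrix (Fin (n+2)) (Fin (n+2)) ℝ)
    = standardMat hn (aOf hn ((A : (Matrix (Fin (n+2)) (Fin (n+2)) ℝ)ˣ) :
        Matrix (Fin (n+2)) (Fin (n+2)) ℝ))
      (BOf hn ((A : (Matrix (Fin (n+2)) (Fin (n+2)) ℝ)ˣ) :
        Matrix (Fin (n+2)) (Fin (n+2)) ℝ)) :=
  (extract' hn _ (A_stab A) (A_form A)).2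

lemma BOf_det : (BOf hn ((A : (Matrix (Fin (n+2)) (Fin (n+2)) ℝ)ˣ) :
    Matrix (Fin (n+2)) (Fin (n+2)) ℝ)).det = 1 := by
  have hdet : ((A : (Matrix (Fin (n+2)) (Fin (n+2)) ℝ)ˣ) :
      Matrix (Fin (n+2)) (Fin (n+2)) ℝ).det = 1 := (Subgroup.mem_inf.mp A.2).1.1
  rw [A_decomp hn A, standardMat_det hn (BOf_form hn A)] at hdet
  exact hdet

noncomputable def BuOf : (Matrix (Fin n) (Fin n) ℝ)ˣ where
  val := BOf hn ((A : (Matrix (Fin (n+2)) (Fin (n+2)) ℝ)ˣ) :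
      Matrix (Fin (n+2)) (Fin (n+2)) ℝ)
  inv := Qm 1 n * (BOf hn ((A : (Matrix (Fin (n+2)) (Fin (n+2)) ℝ)ˣ) :
      Matrix (Fin (n+2)) (Fin (n+2)) ℝ))ᵀ * Qm 1 n
  val_inv := by
    have hB := BOf_form hn A
    set B := BOf hn ((A : (Matrix (Fin (n+2)) (Fin (n+2)) ℝ)ˣ) :
      Matrix (Fin (n+2)) (Fin (n+2)) ℝ)
    have hL : (Qm 1 n * Bᵀ * Qm 1 n) * B = 1 := by
      rw [Matrix.mul_assoc, Matrix.mul_assoc, ← Matrix.mul_assoc Bᵀ, hB, Qm_sq]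
    exact mul_eq_one_comm.mpr hL
  inv_val := by
    have hB := BOf_form hn A
    set B := BOf hn ((A : (Matrix (Fin (n+2)) (Fin (n+2)) ℝ)ˣ) :
      Matrix (Fin (n+2)) (Fin (n+2)) ℝ)
    rw [Matrix.mul_assoc, Matrix.mul_assoc, ← Matrix.mul_assoc Bᵀ, hB, Qm_sq]

lemma BuOf_mem : BuOf hn A ∈ specialIsometry 1 n := by
  refine ⟨BOf_det hn A, ?_⟩
  exact (formPres_iff 1 n _).mpr (BOf_form hn A)

end StdGroup

noncomputable def stdEquiv (hn : 0 < n) :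
    (SemidirectProduct (Multiplicative (Fin n → ℝ)) (↥(specialIsometry 1 n))
      (subgroupMulVecHom (specialIsometry 1 n))) ≃* ↥(poincareGroup n (uvec n)) where
  toFun x := ⟨ψu hn (Multiplicative.toAdd x.left)
      ((x.right : (Matrix (Fin n) (Fin n) ℝ)ˣ)) x.right.2,
    ψu_mem hn _ _ _⟩
  invFun A := ⟨Multiplicative.ofAdd (aOf hn ((A : (Matrix (Fin (n+2)) (Fin (n+2)) ℝ)ˣ) :
      Matrix (Fin (n+2)) (Fin (n+2)) ℝ)),
    ⟨BuOf hn A, BuOf_mem hn A⟩⟩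
  left_inv x := by
    refine SemidirectProduct.ext ?_ ?_
    · show Multiplicative.ofAdd (aOf hn (standardMat hn (Multiplicative.toAdd x.left) _)) = x.left
      rw [aOf_standard]
      exact ofAdd_toAdd x.left
    · refine Subtype.ext (Units.ext ?_)
      show BOf hn (standardMat hn (Multiplicative.toAdd x.left) _) = _
      rw [BOf_standard]
  right_inv A := by
    refine Subtype.ext (Units.ext ?_)
    show standardMat hn _ _ = _
    exact (A_decomp hn A).symm
  map_mul' x y := by
    refine Subtype.ext (Units.ext ?_)
    show standardMat hn (Multiplicative.toAdd (x * y).left)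
        (((x * y).right : (Matrix (Fin n) (Fin n) ℝ)ˣ) : Matrix (Fin n) (Fin n) ℝ)
      = standardMat hn (Multiplicative.toAdd x.left) _
        * standardMat hn (Multiplicative.toAdd y.left) _
    rw [standardMat_mul hn (mem_specialIsometry_matrix x.right.2)]
    rfl

/-! ### Part 6: Householder reflections and Witt-type transitivity -/

section Witt
variable {m : ℕ}

lemma dot_self_nonneg (v : Fin m → ℝ) : 0 ≤ v ⬝ᵥ v :=
  Finset.sum_nonneg fun i _ => mul_self_nonneg _

def Hh (w : Fin m → ℝ) : Matrix (Fin m) (Fin m) ℝ :=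
  1 - (2 / (w ⬝ᵥ w)) • Matrix.vecMulVec w w

lemma vecMulVec_sq (w : Fin m → ℝ) :
    Matrix.vecMulVec w w * Matrix.vecMulVec w w = (w ⬝ᵥ w) • Matrix.vecMulVec w w := by
  ext i j
  simp only [Matrix.mul_apply, Matrix.vecMulVec_apply, Matrix.smul_apply, smul_eq_mul,
    dotProduct]
  rw [Finset.sum_mul]
  exact Finset.sum_congr rfl fun k _ => by ring

lemma vecMulVec_mulVec (w v x : Fin m → ℝ) :
    (Matrix.vecMulVec w v).mulVec x = (v ⬝ᵥ x) • w := by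
  funext i
  simp only [Matrix.mulVec, Matrix.vecMulVec_apply, dotProduct, Pi.smul_apply, smul_eq_mul]
  rw [Finset.sum_mul]
  exact Finset.sum_congr rfl fun k _ => by ring

lemma Hh_symm (w : Fin m → ℝ) : (Hh w)ᵀ = Hh w := by
  unfold Hh
  rw [Matrix.transpose_sub, Matrix.transpose_one, Matrix.transpose_smul]
  congr 1
  ext i j
  simp [Matrix.vecMulVec_apply, Matrix.transpose_apply, mul_comm]

lemma Hh_mul_self {w : Fin m → ℝ} (hw : w ⬝ᵥ w ≠ 0) : Hh w * Hh w = 1 := by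
  unfold Hh
  rw [Matrix.sub_mul, Matrix.mul_sub, Matrix.mul_sub]
  simp only [Matrix.smul_mul, Matrix.mul_smul, Matrix.one_mul, Matrix.mul_one, vecMulVec_sq,
    smul_smul]
  have hc : (2/(w ⬝ᵥ w)) * ((2/(w ⬝ᵥ w)) * (w ⬝ᵥ w)) = 2/(w ⬝ᵥ w) + 2/(w ⬝ᵥ w) := by
    field_simp
    ring
  rw [hc, add_smul]
  abel

lemma Hh_det {w : Fin m → ℝ} (hw : w ⬝ᵥ w ≠ 0) : (Hh w).det = -1 := by
  have hcol : Matrix.replicateCol Unit ((-(2/(w ⬝ᵥ w))) • w) =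
      (-(2/(w ⬝ᵥ w))) • Matrix.replicateCol Unit w := by
    ext i u
    simp [Matrix.replicateCol]
  have heq : Hh w = 1 + Matrix.replicateCol Unit ((-(2/(w ⬝ᵥ w))) • w) * Matrix.replicateRow Unit w := by
    unfold Hh
    rw [hcol, Matrix.smul_mul, ← Matrix.vecMulVec_eq (ι := Unit), sub_eq_add_neg, neg_smul]
  rw [heq, Matrix.det_one_add_replicateCol_mul_replicateRow]
  rw [dotProduct_smul]
  field_simp
  ring_nf
  rw [mul_inv_cancel₀ hw]
  ring

lemma Hh_mulVec_self {w : Fin m → ℝ} (hw : w ⬝ᵥ w ≠ 0) : (Hh w).mulVec w = -w := by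
  unfold Hh
  rw [Matrix.sub_mulVec, Matrix.one_mulVec, Matrix.smul_mulVec, vecMulVec_mulVec]
  funext i
  simp only [Pi.sub_apply, Pi.smul_apply, Pi.neg_apply, smul_eq_mul]
  field_simp
  ring

lemma Hh_mulVec_orth {w x : Fin m → ℝ} (hx : w ⬝ᵥ x = 0) : (Hh w).mulVec x = x := by
  unfold Hh
  rw [Matrix.sub_mulVec, Matrix.one_mulVec, Matrix.smul_mulVec, vecMulVec_mulVec, hx]
  simp

lemma exists_perp (h2 : 2 ≤ m) (q : Fin m → ℝ) :
    ∃ w : Fin m → ℝ, w ⬝ᵥ w ≠ 0 ∧ w ⬝ᵥ q = 0 := by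
  have h0 : (0:ℕ) < m := by omega
  have h1 : (1:ℕ) < m := by omega
  set i0 : Fin m := ⟨0, h0⟩
  set i1 : Fin m := ⟨1, h1⟩
  have hne : i0 ≠ i1 := by simp [i0, i1, Fin.ext_iff]
  by_cases h : q i0 = 0
  · refine ⟨Pi.single i0 1, ?_, ?_⟩
    · rw [single_dotProduct]
      simp
    · rw [single_dotProduct, h]
      simp
  · have heval : ∀ (a b : ℝ) (v : Fin m → ℝ),
        (a • (Pi.single i0 1 : Fin m → ℝ) + b • (Pi.single i1 1 : Fin m → ℝ)) ⬝ᵥ v = a * v i0 + b * v i1 := by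
      intro a b v
      rw [add_dotProduct, smul_dotProduct, smul_dotProduct, single_dotProduct,
        single_dotProduct]
      simp [smul_eq_mul]
    set w := q i1 • (Pi.single i0 1 : Fin m → ℝ) + (-(q i0)) • (Pi.single i1 1 : Fin m → ℝ) with hwdef
    have hwi0 : w i0 = q i1 := by
      simp [hwdef, Pi.single_apply, hne, hne.symm]
    have hwi1 : w i1 = -(q i0) := by
      simp [hwdef, Pi.single_apply, hne, hne.symm]
    refine ⟨w, ?_, ?_⟩
    · rw [hwdef, heval, ← hwdef, hwi0, hwi1]
      have h1 : 0 < q i0 * q i0 := mul_self_pos.mpr h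
      have h2 : 0 ≤ q i1 * q i1 := mul_self_nonneg _
      intro hc
      nlinarith
    · rw [hwdef, heval]
      ring

lemma rot_exists (h2 : 2 ≤ m) (p q : Fin m → ℝ) (hpq : p ⬝ᵥ p = q ⬝ᵥ q) :
    ∃ T : Matrix (Fin m) (Fin m) ℝ, Tᵀ * T = 1 ∧ T.det = 1 ∧ T.mulVec p = q := by
  obtain ⟨w', hw'0, hw'q⟩ := exists_perp h2 q
  by_cases hb : q - p = 0
  · have hpq' : p = q := by
      have := sub_eq_zero.mp hb
      exact this.symm
    exact ⟨1, by simp, by simp, by simp [hpq']⟩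
  · have hbb : (q - p) ⬝ᵥ (q - p) ≠ 0 := fun h => hb (dotProduct_self_eq_zero.mp h)
    refine ⟨Hh w' * Hh (q - p), ?_, ?_, ?_⟩
    · rw [Matrix.transpose_mul, Hh_symm, Hh_symm, Matrix.mul_assoc,
        ← Matrix.mul_assoc (Hh w'), Hh_mul_self hw'0, Matrix.one_mul, Hh_mul_self hbb]
    · rw [Matrix.det_mul, Hh_det hw'0, Hh_det hbb]
      norm_num
    · have horth : (q - p) ⬝ᵥ (p + q) = 0 := by
        rw [sub_dotProduct, dotProduct_add, dotProduct_add]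
        have hc := dotProduct_comm p q
        linarith
      have hp : p = (1/2 : ℝ) • (p + q) + (-(1/2) : ℝ) • (q - p) := by
        funext i
        simp only [Pi.add_apply, Pi.smul_apply, Pi.sub_apply, smul_eq_mul]
        ring
      have hkey : (Hh (q - p)).mulVec p = q := by
        have expand : (Hh (q - p)).mulVec p
            = (Hh (q - p)).mulVec ((1/2 : ℝ) • (p + q))
              + (Hh (q - p)).mulVec ((-(1/2) : ℝ) • (q - p)) := by
          rw [← Matrix.mulVec_add, ← hp]
        rw [expand, Matrix.mulVec_smul, Matrix.mulVec_smul, Hh_mulVec_orth horth,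
          Hh_mulVec_self hbb]
        funext i
        simp only [Pi.add_apply, Pi.smul_apply, Pi.neg_apply, Pi.sub_apply, smul_eq_mul]
        ring
      rw [← Matrix.mulVec_mulVec, hkey, Hh_mulVec_orth hw'q]

end Witt

/-! ### Part 6b: the boost and the full Witt element -/

def boostT (r : ℝ) : Matrix (Fin 2) (Fin 2) ℝ :=
  !![(r + r⁻¹)/2, (r - r⁻¹)/2; (r - r⁻¹)/2, (r + r⁻¹)/2]

lemma boostT_symm (r : ℝ) : (boostT r)ᵀ = boostT r := by
  ext p q
  rw [Matrix.transpose_apply]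
  fin_cases p <;> fin_cases q <;> simp [boostT]

lemma D2_explicit : D2 = !![-1, 0; 0, 1] := by
  ext p q
  fin_cases p <;> fin_cases q <;> simp [D2, d2v, Matrix.diagonal_apply]

lemma boostT_form {r : ℝ} (hr : r ≠ 0) : (boostT r)ᵀ * D2 * boostT r = D2 := by
  rw [boostT_symm, D2_explicit]
  ext p q
  fin_cases p <;> fin_cases q <;>
    simp [boostT, Matrix.mul_apply, Fin.sum_univ_two] <;>
    field_simp <;> ring

lemma boostT_det {r : ℝ} (hr : r ≠ 0) : (boostT r).det = 1 := by
  rw [boostT, Matrix.det_fin_two_of]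
  field_simp
  ring

lemma boostT_ones (r : ℝ) : (boostT r).mulVec (fun _ => 1) = fun _ => r := by
  funext p
  fin_cases p <;> simp [boostT, Matrix.mulVec, dotProduct, Fin.sum_univ_two] <;> ring

lemma form_mul {m : ℕ} {M N : Matrix (Fin m) (Fin m) ℝ} {Q : Matrix (Fin m) (Fin m) ℝ}
    (hM : Mᵀ * Q * M = Q) (hN : Nᵀ * Q * N = Q) :
    (M * N)ᵀ * Q * (M * N) = Q := by
  have e : (M * N)ᵀ * Q * (M * N) = Nᵀ * (Mᵀ * Q * M) * N := by
    rw [Matrix.transpose_mul]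
    noncomm_ring
  rw [e, hM, hN]

lemma formSig_τ (x y : Fin (n+2) → ℝ) :
    formSig 2 (n+2) x y
      = -((fun p => x ((τf (n:=n)).symm (Sum.inl p)))
            ⬝ᵥ (fun p => y ((τf (n:=n)).symm (Sum.inl p))))
        + (fun j => x ((τf (n:=n)).symm (Sum.inr j)))
            ⬝ᵥ (fun j => y ((τf (n:=n)).symm (Sum.inr j))) := by
  rw [formSig_eq, Qm_τ, Matrix.submatrix_mulVec_equiv, dot_equiv (τf (n:=n))]
  have hcomp : ((Qbτ n *ᵥ (y ∘ ⇑(τf (n:=n)).symm)) ∘ ⇑(τf (n:=n))) ∘ ⇑(τf (n:=n)).symm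
      = Qbτ n *ᵥ (y ∘ ⇑(τf (n:=n)).symm) := by
    funext s; simp
  rw [hcomp]
  have hY : y ∘ ⇑(τf (n:=n)).symm
      = Sum.elim (fun p => y ((τf (n:=n)).symm (Sum.inl p)))
          (fun j => y ((τf (n:=n)).symm (Sum.inr j))) := by
    funext s; rcases s with p|j <;> rfl
  have hX : x ∘ ⇑(τf (n:=n)).symm
      = Sum.elim (fun p => x ((τf (n:=n)).symm (Sum.inl p)))
          (fun j => x ((τf (n:=n)).symm (Sum.inr j))) := by
    funext s; rcases s with p|j <;> rfl
  rw [hY, hX]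
  unfold Qbτ
  rw [Matrix.fromBlocks_mulVec]
  simp only [Sum.elim_comp_inl, Sum.elim_comp_inr]
  rw [Matrix.zero_mulVec, Matrix.zero_mulVec, Matrix.one_mulVec, add_zero, zero_add,
    show ((-1 : Matrix (Fin 2) (Fin 2) ℝ)).mulVec (fun p => y ((τf (n:=n)).symm (Sum.inl p)))
        = -(fun p => y ((τf (n:=n)).symm (Sum.inl p))) from by
      rw [Matrix.neg_mulVec, Matrix.one_mulVec],
    sumElim_dotProduct_sumElim, dotProduct_neg]

lemma exists_g (hn2 : 2 ≤ n) (I : Fin (n+2) → ℝ) (hI : I ≠ 0)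
    (hII : formSig 2 (n+2) I I = 0) :
    ∃ gu : (Matrix (Fin (n+2)) (Fin (n+2)) ℝ)ˣ,
      gu ∈ specialIsometry 2 (n+2) ∧
        ((gu : (Matrix (Fin (n+2)) (Fin (n+2)) ℝ)ˣ) :
          Matrix (Fin (n+2)) (Fin (n+2)) ℝ).mulVec (uvec n) = I := by
  have hn : 0 < n := by omega
  set Ip : Fin 2 → ℝ := fun p => I ((τf (n:=n)).symm (Sum.inl p)) with hIp
  set Iq : Fin n → ℝ := fun j => I ((τf (n:=n)).symm (Sum.inr j)) with hIq
  have hsplit : -(Ip ⬝ᵥ Ip) + Iq ⬝ᵥ Iq = 0 := by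
    rw [← formSig_τ I I]
    exact hII
  have hIp0 : Ip ⬝ᵥ Ip ≠ 0 := by
    intro h0
    have hIpz : Ip = 0 := dotProduct_self_eq_zero.mp h0
    have hIqz : Iq = 0 := dotProduct_self_eq_zero.mp (by linarith)
    apply hI
    funext i
    have hi : i = (τf (n:=n)).symm (τf (n:=n) i) := (Equiv.symm_apply_apply _ _).symm
    rw [hi]
    rcases h : (τf (n:=n)) i with p | j
    · exact congrFun hIpz p
    · exact congrFun hIqz j
  set rsq := Ip ⬝ᵥ Ip with hrsq
  have hrsqpos : 0 < rsq := lt_of_le_of_ne (dot_self_nonneg Ip) (Ne.symm hIp0)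
  set r := Real.sqrt rsq with hrdef
  have hr2 : r * r = rsq := Real.mul_self_sqrt (le_of_lt hrsqpos)
  have hrpos : 0 < r := Real.sqrt_pos.mpr hrsqpos
  have hrne : r ≠ 0 := ne_of_gt hrpos
  have hIqq : Iq ⬝ᵥ Iq = rsq := by linarith
  -- the 2-dimensional rotation
  set pin : Fin 2 → ℝ := fun p => if p = 0 then (1:ℝ) else 0 with hpin
  have hpin1 : pin ⬝ᵥ pin = 1 := by
    simp [hpin, dotProduct, Fin.sum_univ_two]
  have hp2 : pin ⬝ᵥ pin = (r⁻¹ • Ip) ⬝ᵥ (r⁻¹ • Ip) := by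
    rw [hpin1, smul_dotProduct, dotProduct_smul, ← hrsq, smul_eq_mul, smul_eq_mul]
    field_simp
    linarith [hr2]
  obtain ⟨S, hSo, hSd, hSv⟩ := rot_exists (le_refl 2) pin (r⁻¹ • Ip) hp2
  -- the n-dimensional rotation
  set qin : Fin n → ℝ := fun j => if (j:ℕ) = 0 then (1:ℝ) else 0 with hqin
  have hqin_single : qin = (Pi.single (⟨0, hn⟩ : Fin n) 1 : Fin n → ℝ) := by
    funext j
    rw [Pi.single_apply]
    show (if (j:ℕ) = 0 then (1:ℝ) else 0) = _
    by_cases hj : (j:ℕ) = 0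
    · rw [if_pos hj, if_pos (Fin.ext hj)]
    · rw [if_neg hj, if_neg (fun hc => hj (by rw [hc]))]
  have hqin1 : qin ⬝ᵥ qin = 1 := by
    rw [hqin_single, single_dotProduct]
    simp
  have hq2 : qin ⬝ᵥ qin = (r⁻¹ • Iq) ⬝ᵥ (r⁻¹ • Iq) := by
    rw [hqin1, smul_dotProduct, dotProduct_smul, hIqq, smul_eq_mul, smul_eq_mul]
    field_simp
    linarith [hr2]
  obtain ⟨T, hTo, hTd, hTv⟩ := rot_exists hn2 qin (r⁻¹ • Iq) hq2
  -- assemble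
  set g1 : Matrix (Fin (n+2)) (Fin (n+2)) ℝ :=
    (Matrix.fromBlocks S 0 0 T).submatrix (τf (n:=n)) (τf (n:=n)) with hg1
  set Dm : Matrix (Fin (n+2)) (Fin (n+2)) ℝ :=
    (Matrix.fromBlocks (boostT r) 0 0 1).submatrix (σf hn) (σf hn) with hDm
  set g : Matrix (Fin (n+2)) (Fin (n+2)) ℝ := g1 * Dm with hg
  have hg1f : g1ᵀ * Qm 2 (n+2) * g1 = Qm 2 (n+2) := by
    rw [hg1, Qm_τ, Matrix.transpose_submatrix, Matrix.submatrix_mul_equiv,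
      Matrix.submatrix_mul_equiv]
    congr 1
    unfold Qbτ
    rw [Matrix.fromBlocks_transpose, Matrix.fromBlocks_multiply, Matrix.fromBlocks_multiply]
    simp only [Matrix.zero_mul, Matrix.mul_zero, add_zero, zero_add, Matrix.mul_one,
      Matrix.mul_neg, Matrix.neg_mul, Matrix.one_mul, Matrix.transpose_zero,
      Matrix.transpose_one, neg_zero]
    rw [hSo, hTo]
  have hDf : Dmᵀ * Qm 2 (n+2) * Dm = Qm 2 (n+2) := by
    rw [hDm, Qm_σ hn, Matrix.transpose_submatrix, Matrix.submatrix_mul_equiv,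
      Matrix.submatrix_mul_equiv]
    congr 1
    unfold Qbσ
    rw [Matrix.fromBlocks_transpose, Matrix.fromBlocks_multiply, Matrix.fromBlocks_multiply]
    simp only [Matrix.zero_mul, Matrix.mul_zero, add_zero, zero_add, Matrix.mul_one,
      Matrix.one_mul, Matrix.transpose_zero, Matrix.transpose_one]
    rw [boostT_form hrne]
  have hgf : gᵀ * Qm 2 (n+2) * g = Qm 2 (n+2) := form_mul hg1f hDf
  have hgd : g.det = 1 := by
    rw [hg, Matrix.det_mul, hg1, hDm, Matrix.det_submatrix_equiv_self,
      Matrix.det_submatrix_equiv_self, Matrix.det_fromBlocks_zero₂₁,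
      Matrix.det_fromBlocks_zero₂₁, hSd, hTd, boostT_det hrne]
    simp
  have hDu : Dm.mulVec (uvec n) = r • uvec n := by
    rw [hDm, uvec_eq_U0_comp hn, Matrix.submatrix_mulVec_equiv]
    have hv : (U0 n ∘ ⇑(σf hn)) ∘ ⇑(σf hn).symm = U0 n := by
      funext s; simp [Function.comp]
    rw [hv]
    have hb : (Matrix.fromBlocks (boostT r) 0 0 (1 : Matrix (Fin n) (Fin n) ℝ)).mulVec (U0 n)
        = r • U0 n := by
      unfold U0
      rw [Matrix.fromBlocks_mulVec]
      simp only [Sum.elim_comp_inl, Sum.elim_comp_inr]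
      simp only [show (fun _ : Fin n => (0:ℝ)) = 0 from rfl, Matrix.mulVec_zero,
        Matrix.zero_mulVec, add_zero, zero_add, boostT_ones]
      funext s
      rcases s with p | j <;> simp
    rw [hb]
    funext i
    simp [Function.comp]
  have hg1u : g1.mulVec (uvec n) = r⁻¹ • I := by
    have huv : uvec n = (Sum.elim pin qin) ∘ ⇑(τf (n:=n)) := by
      funext i
      have := congrFun (uvec_τ (n := n)) ((τf (n:=n)) i)
      simpa using this
    rw [hg1, huv, Matrix.submatrix_mulVec_equiv]
    have hv : ((Sum.elim pin qin) ∘ ⇑(τf (n:=n))) ∘ ⇑(τf (n:=n)).symm = Sum.elim pin qin := by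
      funext s; simp [Function.comp]
    rw [hv, Matrix.fromBlocks_mulVec]
    simp only [Sum.elim_comp_inl, Sum.elim_comp_inr]
    rw [Matrix.zero_mulVec, Matrix.zero_mulVec, add_zero, zero_add, hSv, hTv]
    funext i
    rcases h : (τf (n:=n)) i with p | j
    · have : i = (τf (n:=n)).symm (Sum.inl p) := by rw [← h, Equiv.symm_apply_apply]
      rw [this]
      simp only [Function.comp_apply, Equiv.apply_symm_apply, Sum.elim_inl]
      simp [hIp]
    · have : i = (τf (n:=n)).symm (Sum.inr j) := by rw [← h, Equiv.symm_apply_apply]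
      rw [this]
      simp only [Function.comp_apply, Equiv.apply_symm_apply, Sum.elim_inr]
      simp [hIq]
  have hgu : g.mulVec (uvec n) = I := by
    rw [hg, ← Matrix.mulVec_mulVec, hDu, Matrix.mulVec_smul, hg1u, smul_smul,
      mul_inv_cancel₀ hrne, one_smul]
  have hL : (Qm 2 (n+2) * gᵀ * Qm 2 (n+2)) * g = 1 := by
    rw [Matrix.mul_assoc, Matrix.mul_assoc, ← Matrix.mul_assoc gᵀ, hgf, Qm_sq]
  have hR : g * (Qm 2 (n+2) * gᵀ * Qm 2 (n+2)) = 1 := mul_eq_one_comm.mp hL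
  exact ⟨⟨g, Qm 2 (n+2) * gᵀ * Qm 2 (n+2), hR, hL⟩,
    ⟨hgd, (formPres_iff 2 (n+2) g).mpr hgf⟩, hgu⟩

/-! ### Part 7: conjugating the null vector to the standard one -/

lemma mulVec_unit_cancel {m : ℕ} (gu : (Matrix (Fin m) (Fin m) ℝ)ˣ) (v w : Fin m → ℝ)
    (h : ((gu : (Matrix (Fin m) (Fin m) ℝ)ˣ) : Matrix (Fin m) (Fin m) ℝ).mulVec v = w) :
    ((gu⁻¹ : (Matrix (Fin m) (Fin m) ℝ)ˣ) : Matrix (Fin m) (Fin m) ℝ).mulVec w = v := by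
  rw [← h, Matrix.mulVec_mulVec, gu.inv_mul, Matrix.one_mulVec]

lemma conj_map (gu : (Matrix (Fin (n+2)) (Fin (n+2)) ℝ)ˣ)
    (hg : gu ∈ specialIsometry 2 (n+2)) (I : Fin (n+2) → ℝ)
    (hgu : ((gu : (Matrix (Fin (n+2)) (Fin (n+2)) ℝ)ˣ) :
      Matrix (Fin (n+2)) (Fin (n+2)) ℝ).mulVec (uvec n) = I) :
    Subgroup.map ((MulAut.conj gu⁻¹ : MulAut (Matrix (Fin (n+2)) (Fin (n+2)) ℝ)ˣ) :
        (Matrix (Fin (n+2)) (Fin (n+2)) ℝ)ˣ →* (Matrix (Fin (n+2)) (Fin (n+2)) ℝ)ˣ)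
      (poincareGroup n I) = poincareGroup n (uvec n) := by
  have hginv := mulVec_unit_cancel gu (uvec n) I hgu
  ext x
  simp only [Subgroup.mem_map, MulAut.conj_apply, inv_inv]
  constructor
  · rintro ⟨A, hA, rfl⟩
    obtain ⟨hAiso, hAstab⟩ := Subgroup.mem_inf.mp hA
    rw [poincareGroup, Subgroup.mem_inf]
    refine ⟨mul_mem (mul_mem (inv_mem hg) hAiso) hg, ?_⟩
    show (((gu⁻¹ * A * gu : (Matrix (Fin (n+2)) (Fin (n+2)) ℝ)ˣ)) :
      Matrix (Fin (n+2)) (Fin (n+2)) ℝ).mulVec (uvec n) = uvec n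
    rw [Units.val_mul, Units.val_mul, ← Matrix.mulVec_mulVec, ← Matrix.mulVec_mulVec, hgu]
    have hAI : ((A : (Matrix (Fin (n+2)) (Fin (n+2)) ℝ)ˣ) :
        Matrix (Fin (n+2)) (Fin (n+2)) ℝ).mulVec I = I := hAstab
    rw [hAI, hginv]
  · intro hx
    obtain ⟨hxiso, hxstab⟩ := Subgroup.mem_inf.mp hx
    refine ⟨gu * x * gu⁻¹, ?_, ?_⟩
    · rw [poincareGroup, Subgroup.mem_inf]
      refine ⟨mul_mem (mul_mem hg hxiso) (inv_mem hg), ?_⟩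
      show (((gu * x * gu⁻¹ : (Matrix (Fin (n+2)) (Fin (n+2)) ℝ)ˣ)) :
        Matrix (Fin (n+2)) (Fin (n+2)) ℝ).mulVec I = I
      rw [Units.val_mul, Units.val_mul, ← Matrix.mulVec_mulVec, ← Matrix.mulVec_mulVec, hginv]
      have hxu : ((x : (Matrix (Fin (n+2)) (Fin (n+2)) ℝ)ˣ) :
          Matrix (Fin (n+2)) (Fin (n+2)) ℝ).mulVec (uvec n) = uvec n := hxstab
      rw [hxu, hgu]
    · show gu⁻¹ * (gu * x * gu⁻¹) * gu⁻¹⁻¹ = x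
      group

end
end PoinAux

/-- The Poincaré subgroup `G` is isomorphic, as a group, to the Poincaré group
`ISO(1,n-1)`, i.e. to the semidirect product of the (additive) translation group `ℝ^n`
by `SO(1,n-1) = {B : η(Bu,Bv) = η(u,v), det B = 1}` (where `η = formSig 1 n` is the
standard Minkowski form of signature `(1,n-1)` on `ℝ^n`), acting by matrix–vector
multiplication. -/
theorem poincare_subgroup_iso_iso_poincare_group
    (n : ℕ) (hn : 2 ≤ n) (I : Fin (n + 2) → ℝ) (hI : I ≠ 0)
    (hII : formSig 2 (n + 2) I I = 0) :
    Nonempty ((↥(poincareGroup n I)) ≃*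
      SemidirectProduct (Multiplicative (Fin n → ℝ)) (↥(specialIsometry 1 n))
        (subgroupMulVecHom (specialIsometry 1 n))) := by
  have hn0 : 0 < n := by omega
  obtain ⟨gu, hg, hgu⟩ := PoinAux.exists_g hn I hI (by
    have := PoinAux.formSig_eq 2 (n+2) I I
    exact hII)
  have hmap := PoinAux.conj_map gu hg I hgu
  exact ⟨((MulAut.conj gu⁻¹).subgroupMap (poincareGroup n I)).trans
    ((MulEquiv.subgroupCongr hmap).trans (PoinAux.stdEquiv hn0).symm)⟩
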